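/- arXiv:1706.00722 — 4 statements merged into one kernel-verified Lean document; each statement's English description precedes it below -/
import Mathlib

section
/- (Lemma 3, general form) Let 0 < α₁ ≤ α₂ and 0 < f^sc ≤ f^ed, and fix total demand d > 0. Then for all d₂ ∈ [0, d], PoS(d - d₂, d₂) ≤ PoS(d - min(d, f^ed), min(d, f^ed)). That is, over all splits of fixed total demand d, the price of security is maximized by putting demand min(d, f^ed) at the expensive node and the remainder at the cheap node. -/
/-- Optimal 2-bus dispatch cost with transfer limit `f`. -/
noncomputable def cost (α₁ α₂ f d₁ d₂ : ℝ) : ℝ :=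
  α₁ * (d₁ + min f d₂) + α₂ * max (d₂ - f) 0

/-- Price of security. -/
noncomputable def PoS (α₁ α₂ fsc fed d₁ d₂ : ℝ) : ℝ :=
  cost α₁ α₂ fsc d₁ d₂ / cost α₁ α₂ fed d₁ d₂

lemma cost_eq (α₁ α₂ f d d₂ : ℝ) :
    cost α₁ α₂ f (d - d₂) d₂ = α₁ * d + (α₂ - α₁) * max (d₂ - f) 0 := by
  unfold cost
  rcases le_total d₂ f with h | h
  · rw [min_eq_right h, max_eq_right (by linarith)]; ring
  · rw [min_eq_left h, max_eq_left (by linarith)]; ring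

theorem stmt_9 (α₁ α₂ fsc fed d : ℝ)
    (hα₁ : 0 < α₁) (hα : α₁ ≤ α₂) (hfsc : 0 < fsc) (hf : fsc ≤ fed)
    (hd : 0 < d) :
    ∀ d₂ ∈ Set.Icc (0 : ℝ) d,
      PoS α₁ α₂ fsc fed (d - d₂) d₂ ≤
        PoS α₁ α₂ fsc fed (d - min d fed) (min d fed) := by
  intro d₂ hd₂
  obtain ⟨h0, hdd⟩ := hd₂
  unfold PoS
  rw [cost_eq, cost_eq, cost_eq, cost_eq]
  set m1 := max (d₂ - fsc) 0 with hm1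
  set m2 := max (d₂ - fed) 0 with hm2
  set M := max (min d fed - fsc) 0 with hM
  have hMed : max (min d fed - fed) 0 = 0 := by
    apply max_eq_right; have := min_le_right d fed; linarith
  rw [hMed]
  have hβ : (0:ℝ) ≤ α₂ - α₁ := by linarith
  have hm2n : (0:ℝ) ≤ m2 := le_max_right _ _
  have hMn : (0:ℝ) ≤ M := le_max_right _ _
  have hA : (0:ℝ) < α₁ * d := by positivity
  have hkey : m1 ≤ m2 + M := by
    apply max_le _ (by linarith)
    rcases le_total d₂ fed with h | h
    · have : d₂ ≤ min d fed := le_min hdd h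
      have : min d fed - fsc ≤ M := le_max_left _ _
      have : d₂ - fed ≤ m2 := le_max_left _ _
      linarith [le_max_left (min d fed - fsc) (0:ℝ), le_min hdd h]
    · have hmin : min d fed = fed := min_eq_right (le_trans h hdd)
      have h1 : fed - fsc ≤ M := by rw [hM, hmin]; exact le_max_left _ _
      have h2 : d₂ - fed ≤ m2 := le_max_left _ _
      linarith
  rw [div_le_div_iff₀ (by nlinarith) (by linarith)]
  nlinarith [mul_nonneg hβ hMn, mul_nonneg (mul_nonneg hβ hβ) (mul_nonneg hMn hm2n),
    mul_nonneg (mul_nonneg hβ hA.le) hm2n,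
    mul_le_mul_of_nonneg_left hkey (mul_nonneg hβ hA.le)]
end

section
/- (Theorem 1, worst-case price of security) Let 0 < α₁ ≤ α₂ and 0 < f^sc ≤ f^ed. Then sup over all (d₁, d₂) with d₁, d₂ ≥ 0, d₁ + d₂ > 0 of PoS(d₁, d₂) is attained at (d₁, d₂) = (0, f^ed), and equals α₂/α₁ - (α₂ - α₁)·f^sc/(α₁·f^ed). -/
lemma cost_pos (α₁ α₂ f d₁ d₂ : ℝ) (hα₁ : 0 < α₁) (hα : α₁ ≤ α₂) (hfpos : 0 < f)
    (hd₁ : 0 ≤ d₁) (hd₂ : 0 ≤ d₂) (hd : 0 < d₁ + d₂) :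
    0 < cost α₁ α₂ f d₁ d₂ := by
  unfold cost
  rcases le_total d₂ f with h | h
  · rw [min_eq_right h, max_eq_right (by linarith)]
    nlinarith
  · rw [min_eq_left h, max_eq_left (by linarith)]
    nlinarith

theorem stmt_11 (α₁ α₂ fsc fed : ℝ)
    (hα₁ : 0 < α₁) (hα : α₁ ≤ α₂) (hfsc : 0 < fsc) (hf : fsc ≤ fed) :
    IsGreatest
      {r : ℝ | ∃ d₁ d₂ : ℝ, 0 ≤ d₁ ∧ 0 ≤ d₂ ∧ 0 < d₁ + d₂ ∧
        r = PoS α₁ α₂ fsc fed d₁ d₂}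
      (PoS α₁ α₂ fsc fed 0 fed) ∧
    PoS α₁ α₂ fsc fed 0 fed = α₂ / α₁ - (α₂ - α₁) * fsc / (α₁ * fed) := by
  have hfed : 0 < fed := lt_of_lt_of_le hfsc hf
  have hval : PoS α₁ α₂ fsc fed 0 fed
      = (α₁ * fsc + α₂ * (fed - fsc)) / (α₁ * fed) := by
    unfold PoS cost
    rw [min_eq_left hf, min_eq_left le_rfl, max_eq_left (by linarith),
      max_eq_right (by linarith)]
    ring_nf
  constructor
  · constructor
    · exact ⟨0, fed, le_rfl, hfed.le, by linarith, rfl⟩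
    · rintro r ⟨d₁, d₂, hd₁, hd₂, hd, rfl⟩
      rw [hval]
      have hedpos : 0 < cost α₁ α₂ fed d₁ d₂ := cost_pos _ _ _ _ _ hα₁ hα hfed hd₁ hd₂ hd
      rw [PoS, div_le_div_iff₀ hedpos (by positivity)]
      unfold cost
      rcases le_total d₂ fsc with h1 | h1
      · rw [min_eq_right h1, min_eq_right (by linarith), max_eq_right (by linarith),
          max_eq_right (by linarith)]
        nlinarith [mul_nonneg (mul_nonneg (sub_nonneg.2 hα) (sub_nonneg.2 hf)) (by linarith : (0:ℝ) ≤ d₁ + d₂)]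
      · rcases le_total d₂ fed with h2 | h2
        · rw [min_eq_left h1, min_eq_right h2, max_eq_left (by linarith),
            max_eq_right (by linarith)]
          nlinarith [mul_nonneg hα₁.le (mul_nonneg (mul_nonneg (sub_nonneg.2 hα) (sub_nonneg.2 hf)) hd₁),
            mul_nonneg hα₁.le (mul_nonneg (mul_nonneg hfsc.le (sub_nonneg.2 hα)) (sub_nonneg.2 h2))]
        · rw [min_eq_left h1, min_eq_left h2, max_eq_left (by linarith),
            max_eq_left (by linarith)]
          nlinarith [mul_nonneg (mul_nonneg (sub_nonneg.2 hα) (sub_nonneg.2 hf)) hd₁,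
            mul_nonneg (mul_nonneg (sub_nonneg.2 hα) (sub_nonneg.2 hf)) (sub_nonneg.2 h2),
            mul_nonneg (mul_nonneg hα₁.le (sub_nonneg.2 hf)) (sub_nonneg.2 h2)]
  · rw [hval]
    field_simp
    ring
end

section
/- (Optimality of the greedy dispatch for the 2-bus ED) Suppose 0 < α₁ ≤ α₂, d₁, d₂ ≥ 0, f > 0, and q̄₁ ≥ d₁ + d₂. Then the point (q₁*, q₂*) = (d₁ + min(f, d₂), max(d₂ - f, 0)) minimizes α₁q₁ + α₂q₂ over all (q₁, q₂) with 0 ≤ q₁ ≤ q̄₁, 0 ≤ q₂, q₁ + q₂ = d₁ + d₂, and |q₁ - d₁| ≤ f; the optimal value is α₁(d₁ + min(f, d₂)) + α₂·max(d₂ - f, 0). -/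
theorem stmt_16 (α₁ α₂ d₁ d₂ f qbar₁ : ℝ)
    (hα₁ : 0 < α₁) (hα : α₁ ≤ α₂) (hd₁ : 0 ≤ d₁) (hd₂ : 0 ≤ d₂)
    (hf : 0 < f) (hq : d₁ + d₂ ≤ qbar₁) :
    (0 ≤ d₁ + min f d₂ ∧ d₁ + min f d₂ ≤ qbar₁ ∧ 0 ≤ max (d₂ - f) 0 ∧
      (d₁ + min f d₂) + max (d₂ - f) 0 = d₁ + d₂ ∧
      |(d₁ + min f d₂) - d₁| ≤ f) ∧
    (∀ q₁ q₂ : ℝ, 0 ≤ q₁ → q₁ ≤ qbar₁ → 0 ≤ q₂ → q₁ + q₂ = d₁ + d₂ →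
      |q₁ - d₁| ≤ f →
      α₁ * (d₁ + min f d₂) + α₂ * max (d₂ - f) 0 ≤ α₁ * q₁ + α₂ * q₂) := by
  constructor
  · refine ⟨by positivity, ?_, le_max_right _ _, ?_, ?_⟩
    · rcases le_total f d₂ with h | h
      · simp [min_eq_left h]; linarith
      · simp [min_eq_right h]; linarith
    · rcases le_total f d₂ with h | h
      · rw [min_eq_left h, max_eq_left (by linarith)]; ring
      · rw [min_eq_right h, max_eq_right (by linarith)]; ring
    · rw [abs_le]; constructor
      · have := min_le_left f d₂; nlinarith [le_min hf.le hd₂]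
      · have := min_le_left f d₂; linarith
  · intro q₁ q₂ h0 h1 h2 hsum habs
    rw [abs_le] at habs
    have hq2 : max (d₂ - f) 0 ≤ q₂ := by
      apply max_le <;> linarith
    have key : α₁ * (d₁ + min f d₂) + α₂ * max (d₂ - f) 0
        = α₁ * (d₁ + d₂) + (α₂ - α₁) * max (d₂ - f) 0 := by
      rcases le_total f d₂ with h | h
      · rw [min_eq_left h, max_eq_left (by linarith)]; ring
      · rw [min_eq_right h, max_eq_right (by linarith)]; ring
    rw [key, ← hsum]
    nlinarith [mul_le_mul_of_nonneg_left hq2 (by linarith : (0:ℝ) ≤ α₂ - α₁)]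
end

section
/- (Lemma 1, impact of generation capacity, reduced form) Consider the 2-bus costs with capacity constraint: for cheap capacity Q > 0, define C(Q, f) as the minimum of α₁q₁ + α₂q₂ over q₁ ∈ [0, Q], q₂ ≥ 0, q₁ + q₂ = d, |q₁ - d₁| ≤ f (with d = d₁ + d₂ fixed and both problems feasible). If Q' ≤ Q, then C(Q', f^sc)/C(Q', f^ed) ≤ C(Q, f^sc)/C(Q, f^ed). That is, reducing cheap generation capacity cannot increase the price of security. -/
/-- Feasible set of the capacity-constrained 2-bus dispatch:
cheap output `p.1 ∈ [0, Q]`, expensive output `p.2 ≥ 0`, balance, transfer limit `f`. -/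
def Feas (d₁ d₂ Q f : ℝ) : Set (ℝ × ℝ) :=
  {p | 0 ≤ p.1 ∧ p.1 ≤ Q ∧ 0 ≤ p.2 ∧ p.1 + p.2 = d₁ + d₂ ∧ |p.1 - d₁| ≤ f}

/-- Optimal dispatch cost with cheap capacity `Q` and transfer limit `f`. -/
noncomputable def C (α₁ α₂ d₁ d₂ Q f : ℝ) : ℝ :=
  sInf ((fun p : ℝ × ℝ => α₁ * p.1 + α₂ * p.2) '' Feas d₁ d₂ Q f)

lemma C_eq (α₁ α₂ d₁ d₂ Q f : ℝ) (hα₁ : 0 < α₁) (hα : α₁ ≤ α₂)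
    (hd₁ : 0 ≤ d₁) (hd₂ : 0 ≤ d₂) (hf : 0 ≤ f) (hQ0 : 0 ≤ Q) (hQf : d₁ - f ≤ Q) :
    C α₁ α₂ d₁ d₂ Q f = α₂ * (d₁ + d₂) - (α₂ - α₁) * min Q (min (d₁ + d₂) (d₁ + f)) := by
  set m := min Q (min (d₁ + d₂) (d₁ + f)) with hm
  have hm1 : m ≤ Q := min_le_left _ _
  have hm2 : m ≤ d₁ + d₂ := le_trans (min_le_right _ _) (min_le_left _ _)
  have hm3 : m ≤ d₁ + f := le_trans (min_le_right _ _) (min_le_right _ _)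
  have hm0 : 0 ≤ m := le_min hQ0 (le_min (by linarith) (by linarith))
  have hml : d₁ - f ≤ m := le_min hQf (le_min (by linarith) (by linarith))
  have hmem : ((m, d₁ + d₂ - m) : ℝ × ℝ) ∈ Feas d₁ d₂ Q f :=
    ⟨hm0, hm1, by simp only; linarith, by simp only; ring,
      abs_le.mpr ⟨by simp only; linarith, by simp only; linarith⟩⟩
  apply le_antisymm
  · apply csInf_le
    · refine ⟨α₁ * (d₁ + d₂), ?_⟩
      rintro v ⟨p, ⟨h1, h2, h3, h4, h5⟩, rfl⟩
      dsimp only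
      nlinarith
    · have hv : α₂ * (d₁ + d₂) - (α₂ - α₁) * m = α₁ * m + α₂ * (d₁ + d₂ - m) := by ring
      rw [hv]
      exact ⟨(m, d₁ + d₂ - m), hmem, rfl⟩
  · apply le_csInf ((Set.nonempty_of_mem hmem).image _)
    rintro v ⟨p, ⟨h1, h2, h3, h4, h5⟩, rfl⟩
    obtain ⟨h5a, h5b⟩ := abs_le.mp h5
    have hp : p.1 ≤ m := le_min h2 (le_min (by linarith) (by linarith))
    have hp2 : p.2 = d₁ + d₂ - p.1 := by linarith
    dsimp only
    rw [hp2]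
    nlinarith

theorem stmt_18 (α₁ α₂ d₁ d₂ fsc fed Q Q' : ℝ)
    (hα₁ : 0 < α₁) (hα : α₁ ≤ α₂) (hd₁ : 0 ≤ d₁) (hd₂ : 0 ≤ d₂)
    (hd : 0 < d₁ + d₂) (hfsc : 0 < fsc) (hf : fsc ≤ fed)
    (hQ' : 0 < Q') (hQ : Q' ≤ Q)
    (hfeas : (Feas d₁ d₂ Q' fsc).Nonempty) :
    C α₁ α₂ d₁ d₂ Q' fsc / C α₁ α₂ d₁ d₂ Q' fed ≤
      C α₁ α₂ d₁ d₂ Q fsc / C α₁ α₂ d₁ d₂ Q fed := by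
  obtain ⟨p, h1, h2, h3, h4, h5⟩ := hfeas
  obtain ⟨h5a, h5b⟩ := abs_le.mp h5
  have hQ'f : d₁ - fsc ≤ Q' := by linarith
  have hfed : (0:ℝ) ≤ fed := by linarith
  have e1 := C_eq α₁ α₂ d₁ d₂ Q' fsc hα₁ hα hd₁ hd₂ hfsc.le hQ'.le hQ'f
  have e2 := C_eq α₁ α₂ d₁ d₂ Q' fed hα₁ hα hd₁ hd₂ hfed hQ'.le (by linarith)
  have e3 := C_eq α₁ α₂ d₁ d₂ Q fsc hα₁ hα hd₁ hd₂ hfsc.le (by linarith) (by linarith)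
  have e4 := C_eq α₁ α₂ d₁ d₂ Q fed hα₁ hα hd₁ hd₂ hfed (by linarith) (by linarith)
  rw [e1, e2, e3, e4]
  set d := d₁ + d₂ with hdd
  set k := α₂ - α₁ with hk
  have hk0 : 0 ≤ k := by linarith
  set x := min d (d₁ + fsc) with hx
  set y := min d (d₁ + fed) with hy
  have hxy : x ≤ y := min_le_min le_rfl (by linarith)
  set a := min Q' x with hha
  set b := min Q' y with hhb
  set a' := min Q x with hha'
  set b' := min Q y with hhb'
  have ha'b' : a' ≤ b' := min_le_min le_rfl hxy
  have hbb' : b ≤ b' := min_le_min hQ le_rfl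
  have hxd : x ≤ d := min_le_left _ _
  have hyd : y ≤ d := min_le_left _ _
  have had : a ≤ d := le_trans (min_le_right _ _) hxd
  have hbd : b ≤ d := le_trans (min_le_right _ _) hyd
  have ha'd : a' ≤ d := le_trans (min_le_right _ _) hxd
  have hb'd : b' ≤ d := le_trans (min_le_right _ _) hyd
  have pos : ∀ z : ℝ, z ≤ d → 0 < α₂ * d - k * z := by
    intro z hz
    nlinarith
  rw [div_le_div_iff₀ (pos b hbd) (pos b' hb'd)]
  rcases le_total Q' x with h | h
  · have ha : a = Q' := min_eq_left h
    have hb : b = Q' := min_eq_left (le_trans h hxy)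
    have hQ'd : Q' ≤ d := hb ▸ hbd
    rw [ha, hb]
    calc (α₂ * d - k * Q') * (α₂ * d - k * b')
        ≤ (α₂ * d - k * Q') * (α₂ * d - k * a') := by
          apply mul_le_mul_of_nonneg_left _ (pos Q' hQ'd).le
          have := mul_le_mul_of_nonneg_left ha'b' hk0
          linarith
      _ = (α₂ * d - k * a') * (α₂ * d - k * Q') := mul_comm _ _
  · have ha : a = x := min_eq_right h
    have ha' : a' = x := min_eq_right (le_trans h hQ)
    rw [ha, ha']
    apply mul_le_mul_of_nonneg_left _ (pos x (ha ▸ had)).le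
    have := mul_le_mul_of_nonneg_left hbb' hk0
    linarith
end
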